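/- Let f : ℝ^{n×p} → ℝ be twice continuously differentiable, let X⁰ ∈ ℝ^{n×p} satisfy Assumption A2 with σ̲ ∈ (0,1), and suppose the parameters β, c₁, c₂ and the stepsizes η^k satisfy Assumption A3. Then the PLAM iterates X^{k+1} = X^k − (1/η^k)·(∇f(X^k) − X^kΨ(∇f(X^k)ᵀX^k) + βX^k(X^kᵀX^k − I_p)) satisfy, for every k ≥ 0, σ_min(X^k) ≥ σ̲ and ‖X^kᵀX^k − I_p‖_F ≤ R. -/

import Mathlib

open Matrix Filter

attribute [local instance] Matrix.frobeniusNormedAddCommGroup Matrix.frobeniusNormedSpace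

/-- Spectral norm (largest singular value) of a real matrix. -/
noncomputable def specNorm {n p : ℕ} (A : Matrix (Fin n) (Fin p) ℝ) : ℝ :=
  ⨆ v : Metric.sphere (0 : EuclideanSpace ℝ (Fin p)) 1, ‖Matrix.toEuclideanLin A v.1‖

/-- Smallest singular value of a real matrix. -/
noncomputable def sigmaMin {n p : ℕ} (A : Matrix (Fin n) (Fin p) ℝ) : ℝ :=
  ⨅ v : Metric.sphere (0 : EuclideanSpace ℝ (Fin p)) 1, ‖Matrix.toEuclideanLin A v.1‖

namespace Stmt9Aux

variable {a b c : ℕ}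

lemma norm_eq_sqrt (A : Matrix (Fin a) (Fin b) ℝ) :
    ‖A‖ = Real.sqrt (∑ i, ∑ j, (A i j) ^ 2) := by
  rw [Matrix.frobenius_norm_def, Real.sqrt_eq_rpow]
  congr 1
  refine Finset.sum_congr rfl fun i _ => Finset.sum_congr rfl fun j _ => ?_
  rw [Real.rpow_two, Real.norm_eq_abs, sq_abs]

lemma norm_sq_eq (A : Matrix (Fin a) (Fin b) ℝ) :
    ‖A‖ ^ 2 = ∑ i, ∑ j, (A i j) ^ 2 := by
  rw [norm_eq_sqrt, Real.sq_sqrt]; positivity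

/-- matrix-vector product bound property -/
def MVB (m : ℝ) (A : Matrix (Fin a) (Fin b) ℝ) : Prop :=
  ∀ w : Fin b → ℝ, ∑ i, (A.mulVec w i) ^ 2 ≤ m ^ 2 * ∑ j, (w j) ^ 2

lemma mulVec_sq_le (A : Matrix (Fin a) (Fin b) ℝ) (w : Fin b → ℝ) :
    ∑ i, (A.mulVec w i) ^ 2 ≤ ‖A‖ ^ 2 * ∑ j, (w j) ^ 2 := by
  rw [norm_sq_eq, Finset.sum_mul]
  refine Finset.sum_le_sum fun i _ => ?_
  simpa [Matrix.mulVec, dotProduct] using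
    Finset.sum_mul_sq_le_sq_mul_sq Finset.univ (fun j => A i j) w

lemma dot_le (u v : Fin a → ℝ) :
    ∑ i, u i * v i ≤ Real.sqrt (∑ i, (u i) ^ 2) * Real.sqrt (∑ i, (v i) ^ 2) := by
  have h := Finset.sum_mul_sq_le_sq_mul_sq Finset.univ u v
  calc ∑ i, u i * v i ≤ |∑ i, u i * v i| := le_abs_self _
    _ = Real.sqrt ((∑ i, u i * v i) ^ 2) := (Real.sqrt_sq_eq_abs _).symm
    _ ≤ Real.sqrt ((∑ i, (u i) ^ 2) * ∑ i, (v i) ^ 2) := Real.sqrt_le_sqrt h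
    _ = _ := Real.sqrt_mul (by positivity) _

lemma mulVec_dot (X : Matrix (Fin a) (Fin b) ℝ) (w : Fin b → ℝ) :
    ∑ i, (X.mulVec w i) ^ 2 = ∑ j, (Xᵀ * X).mulVec w j * w j := by
  have : ∑ i, (X.mulVec w i) ^ 2 = X.mulVec w ⬝ᵥ X.mulVec w := by
    simp [dotProduct, sq]
  rw [this, Matrix.dotProduct_mulVec, ← Matrix.mulVec_transpose, Matrix.mulVec_mulVec]
  simp [dotProduct]

lemma mulVec_split {R : ℝ} (X : Matrix (Fin a) (Fin b) ℝ)
    (hX : ‖Xᵀ * X - 1‖ ≤ R) (w : Fin b → ℝ) :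
    |∑ i, (X.mulVec w i) ^ 2 - ∑ j, (w j) ^ 2| ≤ R * ∑ j, (w j) ^ 2 := by
  set S : Matrix (Fin b) (Fin b) ℝ := Xᵀ * X - 1 with hS
  have key : ∑ i, (X.mulVec w i) ^ 2 = (∑ j, S.mulVec w j * w j) + ∑ j, (w j) ^ 2 := by
    rw [mulVec_dot]
    have h1 : Xᵀ * X = S + 1 := by rw [hS]; abel
    rw [h1]
    simp [Matrix.add_mulVec, Matrix.one_mulVec, add_mul, Finset.sum_add_distrib, sq]
  have habs : |∑ j, S.mulVec w j * w j| ≤ R * ∑ j, (w j) ^ 2 := by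
    have hW : Real.sqrt (∑ j, (w j) ^ 2) * Real.sqrt (∑ j, (w j) ^ 2) = ∑ j, (w j) ^ 2 := by
      rw [← Real.sqrt_mul (by positivity), Real.sqrt_mul_self (by positivity)]
    have hsv : Real.sqrt (∑ j, (S.mulVec w j) ^ 2) ≤ ‖S‖ * Real.sqrt (∑ j, (w j) ^ 2) := by
      calc Real.sqrt (∑ j, (S.mulVec w j) ^ 2)
          ≤ Real.sqrt (‖S‖ ^ 2 * ∑ j, (w j) ^ 2) := Real.sqrt_le_sqrt (mulVec_sq_le S w)
        _ = _ := by rw [Real.sqrt_mul (by positivity), Real.sqrt_sq (norm_nonneg _)]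
    have hgen : ∀ u : Fin b → ℝ, (∑ j, u j ^ 2) = (∑ j, (S.mulVec w) j ^ 2) →
        (∑ j, u j * w j) ≤ R * ∑ j, (w j) ^ 2 := by
      intro u hu
      calc ∑ j, u j * w j
          ≤ Real.sqrt (∑ j, (u j) ^ 2) * Real.sqrt (∑ j, (w j) ^ 2) := dot_le u w
        _ = Real.sqrt (∑ j, (S.mulVec w j) ^ 2) * Real.sqrt (∑ j, (w j) ^ 2) := by rw [hu]
        _ ≤ (‖S‖ * Real.sqrt (∑ j, (w j) ^ 2)) * Real.sqrt (∑ j, (w j) ^ 2) :=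
            mul_le_mul_of_nonneg_right hsv (Real.sqrt_nonneg _)
        _ = ‖S‖ * ∑ j, (w j) ^ 2 := by rw [mul_assoc, hW]
        _ ≤ R * ∑ j, (w j) ^ 2 := mul_le_mul_of_nonneg_right hX (by positivity)
    rw [abs_le]
    constructor
    · have h5 := hgen (fun j => -(S.mulVec w j)) (by simp)
      simp only [neg_mul, Finset.sum_neg_distrib] at h5
      linarith
    · exact hgen _ rfl
  rw [key]
  simpa using habs

lemma mvb_of_constraint {R : ℝ} (X : Matrix (Fin a) (Fin b) ℝ)
    (hX : ‖Xᵀ * X - 1‖ ≤ R) : MVB (Real.sqrt (1 + R)) X := by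
  intro w
  have hR : 0 ≤ R := le_trans (norm_nonneg _) hX
  have h := (abs_le.mp (mulVec_split X hX w)).2
  rw [Real.sq_sqrt (by linarith)]
  nlinarith [Finset.sum_nonneg (fun j (_ : j ∈ Finset.univ) => sq_nonneg (w j))]

lemma mvb_lower {R : ℝ} (X : Matrix (Fin a) (Fin b) ℝ)
    (hX : ‖Xᵀ * X - 1‖ ≤ R) (w : Fin b → ℝ) :
    (1 - R) * ∑ j, (w j) ^ 2 ≤ ∑ i, (X.mulVec w i) ^ 2 := by
  have h := (abs_le.mp (mulVec_split X hX w)).1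
  nlinarith [Finset.sum_nonneg (fun j (_ : j ∈ Finset.univ) => sq_nonneg (w j))]

lemma mvb_transpose {m : ℝ} (hm : 0 ≤ m) {X : Matrix (Fin a) (Fin b) ℝ}
    (hX : MVB m X) : MVB m Xᵀ := by
  intro w
  set u : Fin b → ℝ := Xᵀ.mulVec w with hu
  have key : ∑ i, (u i) ^ 2 = ∑ i, X.mulVec u i * w i := by
    have : ∑ i, (u i) ^ 2 = u ⬝ᵥ Xᵀ.mulVec w := by simp [dotProduct, sq, hu]
    rw [this, Matrix.dotProduct_mulVec, Matrix.vecMul_transpose]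
    simp [dotProduct]
  have h2 : ∑ i, X.mulVec u i * w i ≤
      Real.sqrt (∑ i, (X.mulVec u i) ^ 2) * Real.sqrt (∑ i, (w i) ^ 2) := dot_le _ _
  have h3 : Real.sqrt (∑ i, (X.mulVec u i) ^ 2) ≤ m * Real.sqrt (∑ i, (u i) ^ 2) := by
    have := hX u
    calc Real.sqrt (∑ i, (X.mulVec u i) ^ 2) ≤ Real.sqrt (m ^ 2 * ∑ i, (u i) ^ 2) :=
        Real.sqrt_le_sqrt this
      _ = m * Real.sqrt (∑ i, (u i) ^ 2) := by
          rw [Real.sqrt_mul (by positivity), Real.sqrt_sq hm]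
  set sU := Real.sqrt (∑ i, (u i) ^ 2) with hsU
  set sW := Real.sqrt (∑ i, (w i) ^ 2) with hsW
  have hU2 : sU ^ 2 = ∑ i, (u i) ^ 2 := Real.sq_sqrt (by positivity)
  have hW2 : sW ^ 2 = ∑ i, (w i) ^ 2 := Real.sq_sqrt (by positivity)
  have hUn : 0 ≤ sU := Real.sqrt_nonneg _
  have hWn : 0 ≤ sW := Real.sqrt_nonneg _
  have hKey : sU ^ 2 ≤ m * sU * sW := by
    rw [hU2]
    calc ∑ i, (u i) ^ 2 = ∑ i, X.mulVec u i * w i := key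
      _ ≤ _ := h2
      _ ≤ m * sU * sW := mul_le_mul_of_nonneg_right h3 hWn
  have : sU ^ 2 ≤ m ^ 2 * sW ^ 2 := by nlinarith [sq_nonneg (sU - m * sW)]
  rw [hU2, hW2] at this
  exact this

lemma mvb_mul_left {m : ℝ} (hm : 0 ≤ m) {X : Matrix (Fin a) (Fin b) ℝ} (hX : MVB m X)
    (B : Matrix (Fin b) (Fin c) ℝ) : ‖X * B‖ ≤ m * ‖B‖ := by
  have lhs : ‖X * B‖ ^ 2 = ∑ j, ∑ i, ((X * B) i j) ^ 2 := by
    rw [norm_sq_eq]; exact Finset.sum_comm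
  have rhsB : ‖B‖ ^ 2 = ∑ j, ∑ k, (B k j) ^ 2 := by
    rw [norm_sq_eq]; exact Finset.sum_comm
  have hsq : ‖X * B‖ ^ 2 ≤ (m * ‖B‖) ^ 2 := by
    rw [lhs, mul_pow, rhsB, Finset.mul_sum]
    refine Finset.sum_le_sum fun j _ => ?_
    have := hX (fun k => B k j)
    simpa [Matrix.mulVec, dotProduct, Matrix.mul_apply] using this
  exact (pow_le_pow_iff_left₀ (norm_nonneg _) (by positivity) two_ne_zero).mp hsq

lemma mvb_mul_right {m : ℝ} (hm : 0 ≤ m) {X : Matrix (Fin a) (Fin b) ℝ} (hX : MVB m X)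
    (B : Matrix (Fin c) (Fin a) ℝ) : ‖B * X‖ ≤ m * ‖B‖ := by
  have h1 : ‖B * X‖ = ‖(B * X)ᵀ‖ := (Matrix.frobenius_norm_transpose _).symm
  rw [h1, Matrix.transpose_mul]
  calc ‖Xᵀ * Bᵀ‖ ≤ m * ‖Bᵀ‖ := mvb_mul_left hm (mvb_transpose hm hX) _
    _ = m * ‖B‖ := by rw [Matrix.frobenius_norm_transpose]

lemma euclidean_norm_apply (A : Matrix (Fin a) (Fin b) ℝ) (v : EuclideanSpace ℝ (Fin b)) :
    ‖Matrix.toEuclideanLin A v‖ = Real.sqrt (∑ i, (A.mulVec (fun j => v j) i) ^ 2) := by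
  rw [EuclideanSpace.norm_eq]
  congr 1
  refine Finset.sum_congr rfl fun i _ => ?_
  rw [Real.norm_eq_abs, sq_abs]
  rfl

lemma euclidean_norm_sq (v : EuclideanSpace ℝ (Fin b)) (hv : ‖v‖ = 1) :
    ∑ j, (v j) ^ 2 = 1 := by
  have := EuclideanSpace.norm_eq v
  rw [hv] at this
  have h2 : (1:ℝ) = Real.sqrt (∑ i, ‖v i‖ ^ 2) := this
  have h3 := congrArg (· ^ 2) h2
  simp only [one_pow] at h3
  rw [Real.sq_sqrt (by positivity)] at h3
  simpa [Real.norm_eq_abs, sq_abs] using h3.symm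

lemma sphere_nonempty (hb : 0 < b) :
    Nonempty (Metric.sphere (0 : EuclideanSpace ℝ (Fin b)) 1) := by
  refine ⟨⟨EuclideanSpace.single ⟨0, hb⟩ 1, ?_⟩⟩
  simp [EuclideanSpace.norm_single]

lemma specNorm_le {m : ℝ} (hb : 0 < b) (hm : 0 ≤ m) {A : Matrix (Fin a) (Fin b) ℝ}
    (hA : MVB m A) : specNorm A ≤ m := by
  have := sphere_nonempty hb
  refine ciSup_le fun v => ?_
  rw [euclidean_norm_apply]
  have hv : ‖v.1‖ = 1 := by simpa [Metric.mem_sphere, dist_zero_right] using v.2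
  calc Real.sqrt (∑ i, (A.mulVec (fun j => v.1 j) i) ^ 2)
      ≤ Real.sqrt (m ^ 2 * ∑ j, ((v.1 : EuclideanSpace ℝ (Fin b)) j) ^ 2) :=
        Real.sqrt_le_sqrt (hA _)
    _ = m := by rw [euclidean_norm_sq v.1 hv, mul_one, Real.sqrt_sq hm]

lemma norm_le_of_mvb {m : ℝ} (hm : 0 ≤ m) {A : Matrix (Fin a) (Fin b) ℝ} (hA : MVB m A)
    (v : Metric.sphere (0 : EuclideanSpace ℝ (Fin b)) 1) :
    ‖Matrix.toEuclideanLin A v.1‖ ≤ m := by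
  rw [euclidean_norm_apply]
  have hv : ‖v.1‖ = 1 := by simpa [Metric.mem_sphere, dist_zero_right] using v.2
  calc Real.sqrt (∑ i, (A.mulVec (fun j => v.1 j) i) ^ 2)
      ≤ Real.sqrt (m ^ 2 * ∑ j, ((v.1 : EuclideanSpace ℝ (Fin b)) j) ^ 2) :=
        Real.sqrt_le_sqrt (hA _)
    _ = m := by rw [euclidean_norm_sq v.1 hv, mul_one, Real.sqrt_sq hm]

lemma le_sigmaMin {σ : ℝ} (hb : 0 < b) (hσ : 0 ≤ σ) {A : Matrix (Fin a) (Fin b) ℝ}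
    (h : ∀ w : Fin b → ℝ, σ ^ 2 * ∑ j, (w j) ^ 2 ≤ ∑ i, (A.mulVec w i) ^ 2) :
    σ ≤ sigmaMin A := by
  have := sphere_nonempty hb
  refine le_ciInf fun v => ?_
  rw [euclidean_norm_apply]
  have hv : ‖v.1‖ = 1 := by simpa [Metric.mem_sphere, dist_zero_right] using v.2
  have h2 := h (fun j => v.1 j)
  rw [euclidean_norm_sq v.1 hv, mul_one] at h2
  calc σ = Real.sqrt (σ ^ 2) := (Real.sqrt_sq hσ).symm
    _ ≤ _ := Real.sqrt_le_sqrt h2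

lemma sigmaMin_of_zero (A : Matrix (Fin a) (Fin 0) ℝ) : sigmaMin A = 0 := by
  have : IsEmpty (Metric.sphere (0 : EuclideanSpace ℝ (Fin 0)) 1) := by
    constructor
    rintro ⟨v, hv⟩
    have hv0 : v = 0 := Subsingleton.elim _ _
    rw [Metric.mem_sphere, hv0, dist_self] at hv
    norm_num at hv
  exact Real.iInf_of_isEmpty _

lemma sigmaMin_nonpos_of_lt (h : a < b) (A : Matrix (Fin a) (Fin b) ℝ) : sigmaMin A ≤ 0 := by
  have hinj : ¬ Function.Injective (Matrix.toEuclideanLin A) := by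
    intro hinj
    have := LinearMap.finrank_le_finrank_of_injective (f := Matrix.toEuclideanLin A) hinj
    simp [finrank_euclideanSpace_fin] at this
    omega
  have hker : ∃ v : EuclideanSpace ℝ (Fin b), v ≠ 0 ∧ Matrix.toEuclideanLin A v = 0 := by
    rw [← LinearMap.ker_eq_bot] at hinj
    rcases Submodule.exists_mem_ne_zero_of_ne_bot hinj with ⟨v, hv, hv0⟩
    exact ⟨v, hv0, hv⟩
  obtain ⟨v, hv0, hv⟩ := hker
  set u : EuclideanSpace ℝ (Fin b) := ‖v‖⁻¹ • v with hu
  have hnu : ‖u‖ = 1 := by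
    rw [hu, norm_smul, norm_inv, norm_norm, inv_mul_cancel₀ (norm_ne_zero_iff.mpr hv0)]
  have hmem : u ∈ Metric.sphere (0 : EuclideanSpace ℝ (Fin b)) 1 := by
    simp [Metric.mem_sphere, dist_zero_right, hnu]
  have hAu : Matrix.toEuclideanLin A u = 0 := by
    rw [hu, _root_.map_smul, hv, smul_zero]
  have hbdd : BddBelow (Set.range fun v : Metric.sphere (0 : EuclideanSpace ℝ (Fin b)) 1 =>
      ‖Matrix.toEuclideanLin A v.1‖) := ⟨0, by rintro x ⟨w, rfl⟩; exact norm_nonneg _⟩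
  calc sigmaMin A ≤ ‖Matrix.toEuclideanLin A (⟨u, hmem⟩ :
        Metric.sphere (0 : EuclideanSpace ℝ (Fin b)) 1).1‖ := ciInf_le hbdd _
    _ = 0 := by rw [hAu, norm_zero]

lemma extremal (hb : 0 < b) (hba : b ≤ a) {R : ℝ} (hR : 0 ≤ R) :
    ∃ Z : Matrix (Fin a) (Fin b) ℝ, ‖Zᵀ * Z - 1‖ ≤ R ∧
      ∃ v : Metric.sphere (0 : EuclideanSpace ℝ (Fin b)) 1,
        ‖Matrix.toEuclideanLin Z v.1‖ = Real.sqrt (1 + R) := by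
  classical
  set Z : Matrix (Fin a) (Fin b) ℝ := Matrix.of (fun i j =>
    if (i : ℕ) = (j : ℕ) then (if (j : ℕ) = 0 then Real.sqrt (1 + R) else 1) else 0) with hZ
  set D : Matrix (Fin b) (Fin b) ℝ := Matrix.of (fun j k =>
    if j = k ∧ (j : ℕ) = 0 then R else 0) with hD
  have hsq : Real.sqrt (1 + R) ^ 2 = 1 + R := Real.sq_sqrt (by linarith)
  have hSeq : Zᵀ * Z - 1 = D := by
    ext j k
    rw [Matrix.sub_apply, Matrix.mul_apply, Matrix.one_apply]
    simp only [hD, Matrix.of_apply]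
    rcases eq_or_ne j k with rfl | hjk
    · rw [Finset.sum_eq_single (⟨(j : ℕ), lt_of_lt_of_le j.2 hba⟩ : Fin a)]
      · simp only [hZ, Matrix.transpose_apply, Matrix.of_apply]
        rcases eq_or_ne ((j : ℕ)) 0 with h0 | h0
        · simp [h0, ← sq, hsq]
        · simp [h0]
      · intro i _ hi
        have hne : (i : ℕ) ≠ (j : ℕ) := fun hc => hi (Fin.ext hc)
        simp [hZ, hne]
      · intro h; exact absurd (Finset.mem_univ _) h
    · have hz : ∑ i, Zᵀ j i * Z i k = 0 := by
        refine Finset.sum_eq_zero fun i _ => ?_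
        rcases eq_or_ne ((i : ℕ)) ((j : ℕ)) with hij | hij
        · have : (i : ℕ) ≠ (k : ℕ) := by
            rw [hij]; exact fun hc => hjk (Fin.ext hc)
          simp [hZ, this]
        · simp [hZ, hij]
      rw [hz]
      simp [hjk]
  have hSnorm : ‖Zᵀ * Z - 1‖ = R := by
    rw [hSeq, norm_eq_sqrt]
    have hrow : ∀ j : Fin b, ∑ k, (D j k) ^ 2 = if (j : ℕ) = 0 then R ^ 2 else 0 := by
      intro j
      rcases eq_or_ne ((j : ℕ)) 0 with h0 | h0
      · rw [if_pos h0, Finset.sum_eq_single j]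
        · simp [hD, h0]
        · intro k _ hk; simp [hD, Ne.symm hk]
        · intro h; exact absurd (Finset.mem_univ _) h
      · rw [if_neg h0]
        exact Finset.sum_eq_zero fun k _ => by simp [hD, h0]
    rw [Finset.sum_congr rfl fun j _ => hrow j]
    have hone : ∑ j : Fin b, (if (j : ℕ) = 0 then R ^ 2 else 0) = R ^ 2 := by
      rw [Finset.sum_eq_single (⟨0, hb⟩ : Fin b)]
      · simp
      · intro k _ hk
        have : (k : ℕ) ≠ 0 := fun hc => hk (Fin.ext hc)
        simp [this]
      · intro h; exact absurd (Finset.mem_univ _) h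
    rw [hone, Real.sqrt_sq hR]
  refine ⟨Z, le_of_eq hSnorm, ?_⟩
  set j0 : Fin b := ⟨0, hb⟩ with hj0
  set v : EuclideanSpace ℝ (Fin b) := EuclideanSpace.single j0 1 with hv
  have hvmem : v ∈ Metric.sphere (0 : EuclideanSpace ℝ (Fin b)) 1 := by
    simp [hv, EuclideanSpace.norm_single]
  refine ⟨⟨v, hvmem⟩, ?_⟩
  rw [euclidean_norm_apply]
  congr 1
  have hmv : ∀ i, Z.mulVec (fun j => v j) i = Z i j0 := by
    intro i
    simp only [Matrix.mulVec, dotProduct]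
    rw [Finset.sum_eq_single j0]
    · have : v j0 = 1 := by rw [hv, EuclideanSpace.single_apply, if_pos rfl]
      rw [this, mul_one]
    · intro k _ hk
      have : v k = 0 := by rw [hv, EuclideanSpace.single_apply, if_neg hk]
      rw [this, mul_zero]
    · intro h; exact absurd (Finset.mem_univ _) h
  rw [Finset.sum_congr rfl fun i _ => by rw [hmv i]]
  rw [Finset.sum_eq_single (⟨0, lt_of_lt_of_le hb hba⟩ : Fin a)]
  · simp [hZ, hj0, hsq]
  · intro i _ hi
    have : (i : ℕ) ≠ 0 := fun hc => hi (Fin.ext hc)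
    simp [hZ, hj0, this]
  · intro h; exact absurd (Finset.mem_univ _) h

lemma entry_abs_le (A : Matrix (Fin a) (Fin b) ℝ) (i : Fin a) (j : Fin b) :
    |A i j| ≤ ‖A‖ := by
  have h1 : (A i j) ^ 2 ≤ ‖A‖ ^ 2 := by
    rw [norm_sq_eq]
    calc (A i j) ^ 2 ≤ ∑ j', (A i j') ^ 2 :=
        Finset.single_le_sum (f := fun j' => (A i j') ^ 2) (fun k _ => sq_nonneg _)
          (Finset.mem_univ j)
      _ ≤ ∑ i', ∑ j', (A i' j') ^ 2 :=
        Finset.single_le_sum (f := fun i' => ∑ j', (A i' j') ^ 2)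
          (fun k _ => Finset.sum_nonneg fun _ _ => sq_nonneg _) (Finset.mem_univ i)
  calc |A i j| = Real.sqrt ((A i j) ^ 2) := (Real.sqrt_sq_eq_abs _).symm
    _ ≤ Real.sqrt (‖A‖ ^ 2) := Real.sqrt_le_sqrt h1
    _ = ‖A‖ := Real.sqrt_sq (norm_nonneg _)

lemma isCompact_C (R : ℝ) :
    IsCompact {Z : Matrix (Fin a) (Fin b) ℝ | ‖Zᵀ * Z - 1‖ ≤ R} := by
  have hcont : Continuous fun Z : Matrix (Fin a) (Fin b) ℝ => ‖Zᵀ * Z - 1‖ :=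
    ((continuous_id.matrix_transpose.matrix_mul continuous_id).sub continuous_const).norm
  have hclosed : IsClosed {Z : Matrix (Fin a) (Fin b) ℝ | ‖Zᵀ * Z - 1‖ ≤ R} :=
    isClosed_le hcont continuous_const
  have hbounded : Bornology.IsBounded {Z : Matrix (Fin a) (Fin b) ℝ | ‖Zᵀ * Z - 1‖ ≤ R} := by
    rw [Metric.isBounded_iff_subset_closedBall 0]
    refine ⟨Real.sqrt (b + b * R), fun Z hZ => ?_⟩
    rw [Metric.mem_closedBall, dist_zero_right]
    have hZZ : ∀ j, (Zᵀ * Z) j j = ∑ i, (Z i j) ^ 2 := by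
      intro j; rw [Matrix.mul_apply]
      exact Finset.sum_congr rfl fun i _ => by rw [Matrix.transpose_apply, sq]
    have hdiag : ∀ j : Fin b, (Zᵀ * Z) j j ≤ 1 + R := by
      intro j
      have h1 : (Zᵀ * Z - (1 : Matrix (Fin b) (Fin b) ℝ)) j j = (Zᵀ * Z) j j - 1 := by
        rw [Matrix.sub_apply, Matrix.one_apply_eq]
      have h2 : |(Zᵀ * Z - (1 : Matrix (Fin b) (Fin b) ℝ)) j j| ≤ R :=
        (entry_abs_le _ j j).trans hZ
      have h3 := abs_le.mp h2
      rw [h1] at h3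
      linarith [h3.2]
    have hnormsq : ‖Z‖ ^ 2 ≤ b + b * R := by
      rw [norm_sq_eq]
      have hcomm : ∑ i, ∑ j, (Z i j) ^ 2 = ∑ j, ∑ i, (Z i j) ^ 2 := Finset.sum_comm
      rw [hcomm]
      calc ∑ j : Fin b, ∑ i, (Z i j) ^ 2 = ∑ j : Fin b, (Zᵀ * Z) j j :=
            Finset.sum_congr rfl fun j _ => (hZZ j).symm
        _ ≤ ∑ _j : Fin b, (1 + R) := Finset.sum_le_sum fun j _ => hdiag j
        _ = b * (1 + R) := by
            rw [Finset.sum_const, Finset.card_univ, Fintype.card_fin, nsmul_eq_mul]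
        _ = b + b * R := by ring
    calc ‖Z‖ = Real.sqrt (‖Z‖ ^ 2) := (Real.sqrt_sq (norm_nonneg _)).symm
      _ ≤ Real.sqrt (b + b * R) := Real.sqrt_le_sqrt hnormsq
  exact Metric.isCompact_of_isClosed_isBounded hclosed hbounded

lemma g_continuous (f : Matrix (Fin a) (Fin b) ℝ → ℝ)
    (g : Matrix (Fin a) (Fin b) ℝ → Matrix (Fin a) (Fin b) ℝ)
    (hf : ContDiff ℝ 2 f)
    (hg : ∀ Z H, fderiv ℝ f Z H = Matrix.trace ((g Z)ᵀ * H)) :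
    Continuous g := by
  have hgeq : ∀ Z i j, g Z i j = fderiv ℝ f Z (Matrix.single i j 1) := by
    intro Z i j
    rw [hg, Matrix.trace]
    rw [Finset.sum_eq_single j]
    · rw [Matrix.diag_apply, Matrix.mul_apply, Finset.sum_eq_single i]
      · simp [Matrix.single]
      · intro k _ hk
        simp [Matrix.single, hk]
        exact fun h => absurd h.symm hk
      · intro h; exact absurd (Finset.mem_univ _) h
    · intro k _ hk
      rw [Matrix.diag_apply, Matrix.mul_apply]
      refine Finset.sum_eq_zero fun l _ => ?_
      simp [Matrix.single, Ne.symm hk]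
    · intro h; exact absurd (Finset.mem_univ _) h
  have hcf : Continuous (fderiv ℝ f) := hf.continuous_fderiv (by simp)
  refine continuous_matrix fun i j => ?_
  have h2 : Continuous fun Z => fderiv ℝ f Z (Matrix.single i j 1) :=
    hcf.clm_apply continuous_const
  simpa only [← hgeq] using h2

lemma step_identity (X g0 : Matrix (Fin a) (Fin b) ℝ) (t β : ℝ) :
    (X - t • (g0 - X * ((1/2 : ℝ) • (g0ᵀ * X + Xᵀ * g0)) + β • (X * (Xᵀ * X - 1))))ᵀ *
      (X - t • (g0 - X * ((1/2 : ℝ) • (g0ᵀ * X + Xᵀ * g0)) + β • (X * (Xᵀ * X - 1)))) - 1 =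
    (1 - 2*t*β) • (Xᵀ * X - 1) + (-(2*t*β)) • ((Xᵀ * X - 1) * (Xᵀ * X - 1)) +
      t • ((Xᵀ * X - 1) * ((1/2 : ℝ) • (g0ᵀ * X + Xᵀ * g0)) +
           ((1/2 : ℝ) • (g0ᵀ * X + Xᵀ * g0)) * (Xᵀ * X - 1)) +
      (t*t) • ((g0 - X * ((1/2 : ℝ) • (g0ᵀ * X + Xᵀ * g0)) + β • (X * (Xᵀ * X - 1)))ᵀ *
        (g0 - X * ((1/2 : ℝ) • (g0ᵀ * X + Xᵀ * g0)) + β • (X * (Xᵀ * X - 1)))) := by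
  simp only [transpose_sub, transpose_add, transpose_smul, transpose_mul, transpose_transpose,
    transpose_one, Matrix.sub_mul, Matrix.mul_sub, Matrix.add_mul, Matrix.mul_add,
    Matrix.smul_mul, Matrix.mul_smul, smul_smul, smul_sub, smul_add, Matrix.mul_one,
    Matrix.one_mul, Matrix.mul_assoc]
  module

lemma sq_ge_one {M : ℝ} (h : 1 ≤ M) : 1 ≤ M ^ 2 := by nlinarith

lemma sq_le_one'' {σ : ℝ} (h0 : 0 < σ) (h1 : σ < 1) : σ ^ 2 ≤ 1 := by nlinarith

lemma arith_beta_pos {M N β σ : ℝ} (hσ0 : 0 < σ) (hMN0 : 0 ≤ M * N)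
    (hβσ : 4 * M * N < β * σ ^ 2) : 0 < β := by nlinarith [sq_nonneg σ]

lemma arith_eta2β {R M N NL β σ c₂ e : ℝ} (hRpos : 0 < R) (hσ0 : 0 < σ) (hσ1 : σ < 1)
    (hM1 : 1 ≤ M) (hMN0 : 0 ≤ M * N) (hβpos : 0 < β) (hNLβRM : β * R * M ≤ NL)
    (hc2pos : 0 < c₂) (hc2NL : c₂ * (2 * NL ^ 2) ≤ R ^ 2 * (β * σ ^ 2 - 4 * M * N))
    (hec : R + 2 * M ^ 2 ≤ e * c₂) : 2 * β ≤ e := by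
  have hM2 : 1 ≤ M ^ 2 := sq_ge_one hM1
  have hσle1 : σ ^ 2 ≤ 1 := sq_le_one'' hσ0 hσ1
  have s1 : (β * R * M) ^ 2 ≤ NL ^ 2 :=
    pow_le_pow_left₀ (mul_nonneg (mul_nonneg hβpos.le hRpos.le)
      (lt_of_lt_of_le one_pos hM1).le) hNLβRM 2
  have s3 : c₂ * (2 * (β * R * M) ^ 2) ≤ R ^ 2 * (β * σ ^ 2) := by nlinarith
  have s4 : 2 * c₂ * β * M ^ 2 ≤ σ ^ 2 := by
    by_contra hcon
    push_neg at hcon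
    have hd : 0 < β * R ^ 2 := mul_pos hβpos (pow_pos hRpos 2)
    have := mul_lt_mul_of_pos_left hcon hd
    nlinarith
  have s5a : 0 ≤ 2 * β * c₂ * (M ^ 2 - 1) :=
    mul_nonneg (mul_nonneg (mul_nonneg (by norm_num) hβpos.le) hc2pos.le) (by linarith)
  have s5 : 2 * β * c₂ ≤ R + 2 * M ^ 2 := by nlinarith
  have s6 := le_trans s5 hec
  exact le_of_mul_le_mul_right (by linarith) hc2pos

lemma arith_etaD {R M N NL β σ c₂ e : ℝ} (hRpos : 0 < R) (hR1 : R < 1) (hσ0 : 0 < σ)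
    (hσ1 : σ < 1) (hM1 : 1 ≤ M) (hMN0 : 0 ≤ M * N) (hβpos : 0 < β)
    (hβσ : 4 * M * N < β * σ ^ 2) (hRle : R ≤ 1 - σ ^ 2)
    (hc2pos : 0 < c₂) (hc2NL : c₂ * (2 * NL ^ 2) ≤ R ^ 2 * (β * σ ^ 2 - 4 * M * N))
    (hec : R + 2 * M ^ 2 ≤ e * c₂) :
    NL ^ 2 ≤ 2 * R * (β * (1 - R) - M * N) * e := by
  have hM2 : 1 ≤ M ^ 2 := sq_ge_one hM1
  have hA0 : 0 ≤ β * σ ^ 2 - 4 * M * N := by linarith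
  have hDge : β * σ ^ 2 - 4 * M * N ≤ β * (1 - R) - M * N := by
    have h1 : 0 ≤ β * (1 - R - σ ^ 2) := mul_nonneg hβpos.le (by linarith)
    nlinarith
  have hDpos : 0 < β * (1 - R) - M * N := lt_of_lt_of_le (by linarith) hDge
  have c3 : β * σ ^ 2 - 4 * M * N ≤ 4 * (β * (1 - R) - M * N) * (R + 2 * M ^ 2) := by
    nlinarith
  have e1 : R ^ 2 * (β * σ ^ 2 - 4 * M * N) ≤
      4 * R * (β * (1 - R) - M * N) * (R + 2 * M ^ 2) := by
    have d1 := mul_le_mul_of_nonneg_left c3 hRpos.le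
    have d2 : 0 ≤ R * ((1 - R) * (β * σ ^ 2 - 4 * M * N)) :=
      mul_nonneg hRpos.le (mul_nonneg (by linarith) hA0)
    nlinarith [d1, d2]
  have e2 : 2 * (NL ^ 2 * c₂) ≤ 4 * R * (β * (1 - R) - M * N) * (e * c₂) := by
    calc 2 * (NL ^ 2 * c₂) = c₂ * (2 * NL ^ 2) := by ring
      _ ≤ R ^ 2 * (β * σ ^ 2 - 4 * M * N) := hc2NL
      _ ≤ 4 * R * (β * (1 - R) - M * N) * (R + 2 * M ^ 2) := e1
      _ ≤ 4 * R * (β * (1 - R) - M * N) * (e * c₂) := by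
          refine mul_le_mul_of_nonneg_left hec ?_
          have := mul_pos hRpos hDpos
          nlinarith
  have e3 : NL ^ 2 * c₂ ≤ (2 * R * (β * (1 - R) - M * N) * e) * c₂ := by linarith
  exact le_of_mul_le_mul_right e3 hc2pos

lemma arith_key {R M N NL β t sS lam gG : ℝ}
    (hRpos : 0 < R) (hR1 : R < 1) (hMN0 : 0 ≤ M * N) (hβpos : 0 < β) (hNL0 : 0 ≤ NL)
    (ht0 : 0 < t) (ht2β : 2 * t * β ≤ 1)
    (htNL : t * NL ^ 2 ≤ 2 * R * (β * (1 - R) - M * N))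
    (hsR : sS ≤ R) (hs0 : 0 ≤ sS) (hlam : lam ≤ M * N) (hlam0 : 0 ≤ lam)
    (hgG : gG ≤ NL) (hgG0 : 0 ≤ gG) :
    (1 - 2*t*β) * sS + (2*t*β) * (sS * sS) + t * (sS * lam + lam * sS) +
      (t*t) * (gG * gG) ≤ R := by
  have h2tβ : 0 ≤ 2 * t * β := by positivity
  have e1 : (2*t*β) * (sS * sS) ≤ (2*t*β) * (R * sS) :=
    mul_le_mul_of_nonneg_left (mul_le_mul_of_nonneg_right hsR hs0) h2tβ
  have e2 : t * (sS * lam + lam * sS) ≤ t * (2 * (M * N) * sS) := by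
    refine mul_le_mul_of_nonneg_left ?_ ht0.le
    nlinarith
  have e3 : (t*t) * (gG * gG) ≤ (t*t) * (NL * NL) := by
    refine mul_le_mul_of_nonneg_left ?_ (by positivity)
    nlinarith
  have e5 : (t*t) * (NL * NL) ≤ t * (2 * R * (β * (1 - R) - M * N)) := by
    have e4 : t * (NL * NL) ≤ 2 * R * (β * (1 - R) - M * N) := by nlinarith
    calc (t*t) * (NL * NL) = t * (t * (NL * NL)) := by ring
      _ ≤ t * (2 * R * (β * (1 - R) - M * N)) := mul_le_mul_of_nonneg_left e4 ht0.le
  have htβR : 0 ≤ t * (β * R) := mul_nonneg ht0.le (mul_nonneg hβpos.le hRpos.le)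
  have htMN : 0 ≤ t * (M * N) := mul_nonneg ht0.le hMN0
  have hc : 0 ≤ 1 - 2*t*β + 2*t*β*R + 2*t*(M*N) := by nlinarith
  have step2 : (1 - 2*t*β + 2*t*β*R + 2*t*(M*N)) * sS ≤
      (1 - 2*t*β + 2*t*β*R + 2*t*(M*N)) * R := mul_le_mul_of_nonneg_left hsR hc
  nlinarith [e1, e2, e3, e5, step2]

end Stmt9Aux

set_option maxHeartbeats 2000000 in
open Stmt9Aux in
/-- Lemma 3 of the paper: under Assumptions A2 and A3, the PLAM
iterates satisfy `σ_min(X^k) ≥ σ̲` and `‖X^kᵀX^k − I_p‖_F ≤ R` for every `k`. -/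
theorem stmt9 {n p : ℕ}
    -- `f` twice continuously differentiable, `g` its gradient
    (f : Matrix (Fin n) (Fin p) ℝ → ℝ)
    (g : Matrix (Fin n) (Fin p) ℝ → Matrix (Fin n) (Fin p) ℝ)
    (hf : ContDiff ℝ 2 f)
    (hg : ∀ Z H, fderiv ℝ f Z H = Matrix.trace ((g Z)ᵀ * H))
    -- initial point and Assumption A2
    (X0 : Matrix (Fin n) (Fin p) ℝ) (σ : ℝ)
    (hσ : 0 < σ ∧ σ < 1)
    (hA2 : σ ≤ sigmaMin X0 ∧ 0 < ‖X0ᵀ * X0 - 1‖ ∧ ‖X0ᵀ * X0 - 1‖ ≤ 1 - σ ^ 2)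
    -- the constants `R, C, M, N, L, N_L` of the paper
    (β c₁ c₂ Lh ηlo ηhi : ℝ) (η : ℕ → ℝ)
    (R M N L NL : ℝ)
    (hR : R = ‖X0ᵀ * X0 - 1‖)
    (hM : M = sSup (specNorm '' {Z : Matrix (Fin n) (Fin p) ℝ | ‖Zᵀ * Z - 1‖ ≤ R}))
    (hN : N = sSup ((fun Z => ‖g Z‖) '' {Z : Matrix (Fin n) (Fin p) ℝ | ‖Zᵀ * Z - 1‖ ≤ R}))
    (hL : L = sSup ((fun Z => @Norm.norm _ ContinuousLinearMap.hasOpNorm (fderiv ℝ g Z)) ''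
      {Z : Matrix (Fin n) (Fin p) ℝ | ‖Zᵀ * Z - 1‖ ≤ R}))
    (hNL : NL = (1 + M ^ 2) * N + β * R * M)
    -- the merit function `h` and a Lipschitz constant `L_h` of `∇h` on `C`
    (hfn : Matrix (Fin n) (Fin p) ℝ → ℝ)
    (hhfn : ∀ Z, hfn Z = f Z -
        (1 / 2) * Matrix.trace (((1 / 2 : ℝ) • ((g Z)ᵀ * Z + Zᵀ * g Z))ᵀ * (Zᵀ * Z - 1)) +
        (β / 4) * ‖Zᵀ * Z - 1‖ ^ 2)
    (hLh : 0 < Lh)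
    (hLhLip : ∀ Z W : Matrix (Fin n) (Fin p) ℝ, ‖Zᵀ * Z - 1‖ ≤ R → ‖Wᵀ * W - 1‖ ≤ R →
      @Norm.norm _ ContinuousLinearMap.hasOpNorm (fderiv ℝ hfn Z - fderiv ℝ hfn W) ≤ Lh * ‖Z - W‖)
    -- Assumption A3
    (hc1 : 0 < c₁ ∧ c₁ < 1 / 2)
    (hβ : β > max (M * N / σ ^ 2 +
        Real.sqrt (M ^ 2 * N ^ 2 / σ ^ 4 + (N + L * M) ^ 2 / (4 * σ ^ 2 * (1 - 2 * c₁))))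
      (max (M * N / σ) (4 * M * N / σ ^ 2)))
    (hc2 : 0 < c₂ ∧ c₂ ≤ R ^ 2 * (β * σ ^ 2 - 4 * M * N) / (2 * NL ^ 2))
    (hηlo : ηlo = max (Lh / (2 * c₁))
      (max ((2 * NL * M + NL * Real.sqrt (4 * M ^ 2 + 2 * R)) / R) ((R + 2 * M ^ 2) / c₂)))
    (hηhi : ηlo ≤ ηhi)
    (hη : ∀ k, ηlo ≤ η k ∧ η k ≤ ηhi)
    -- the gradient of the augmented Lagrangian with multiplier `Λ = Ψ(∇f(X)ᵀX)`
    (gL : Matrix (Fin n) (Fin p) ℝ → Matrix (Fin n) (Fin p) ℝ)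
    (hgL : ∀ Z, gL Z = g Z - Z * ((1 / 2 : ℝ) • ((g Z)ᵀ * Z + Zᵀ * g Z)) +
      β • (Z * (Zᵀ * Z - 1)))
    -- the PLAM iterates
    (X : ℕ → Matrix (Fin n) (Fin p) ℝ)
    (hX0 : X 0 = X0)
    (hrec : ∀ k, X (k + 1) = X k - (1 / η k) • gL (X k))
    :
    ∀ k, σ ≤ sigmaMin (X k) ∧ ‖(X k)ᵀ * X k - 1‖ ≤ R := by
  obtain ⟨hσ0, hσ1⟩ := hσ
  obtain ⟨hA2a, hA2b, hA2c⟩ := hA2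
  -- basic facts about the dimensions
  rcases Nat.eq_zero_or_pos p with rfl | hp
  · exfalso
    have := sigmaMin_of_zero X0
    linarith [hA2a]
  have hnp : p ≤ n := by
    by_contra h
    push_neg at h
    have := sigmaMin_nonpos_of_lt h X0
    linarith [hA2a]
  -- facts about R
  have hRpos : 0 < R := hR ▸ hA2b
  have hRle : R ≤ 1 - σ ^ 2 := hR ▸ hA2c
  have hR1 : R < 1 := by
    have := pow_pos hσ0 2
    linarith
  have hX0C : ‖X0ᵀ * X0 - 1‖ ≤ R := le_of_eq hR.symm
  -- facts about M
  have hMub : ∀ Z : Matrix (Fin n) (Fin p) ℝ, ‖Zᵀ * Z - 1‖ ≤ R →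
      specNorm Z ≤ Real.sqrt (1 + R) :=
    fun Z hZ => specNorm_le hp (Real.sqrt_nonneg _) (mvb_of_constraint Z hZ)
  have hbddSpec : BddAbove (specNorm '' {Z : Matrix (Fin n) (Fin p) ℝ | ‖Zᵀ * Z - 1‖ ≤ R}) := by
    refine ⟨Real.sqrt (1 + R), ?_⟩
    rintro x ⟨Z, hZ, rfl⟩
    exact hMub Z hZ
  have hMle : M ≤ Real.sqrt (1 + R) := by
    rw [hM]
    exact csSup_le ⟨specNorm X0, ⟨X0, hX0C, rfl⟩⟩ (by rintro x ⟨Z, hZ, rfl⟩; exact hMub Z hZ)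
  have hMge : Real.sqrt (1 + R) ≤ M := by
    obtain ⟨Z, hZC, v, hv⟩ := extremal hp hnp hRpos.le
    have hbddr : BddAbove (Set.range fun v : Metric.sphere (0 : EuclideanSpace ℝ (Fin p)) 1 =>
        ‖Matrix.toEuclideanLin Z v.1‖) := by
      refine ⟨Real.sqrt (1 + R), ?_⟩
      rintro x ⟨w, rfl⟩
      exact norm_le_of_mvb (Real.sqrt_nonneg _) (mvb_of_constraint Z hZC) w
    have h1 : Real.sqrt (1 + R) ≤ specNorm Z := hv ▸ le_ciSup hbddr v
    have h2 : specNorm Z ≤ M := hM ▸ le_csSup hbddSpec ⟨Z, hZC, rfl⟩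
    linarith
  have hMeq : M = Real.sqrt (1 + R) := le_antisymm hMle hMge
  have hM1 : 1 ≤ M := by
    rw [hMeq]
    have h := Real.sqrt_le_sqrt (show (1:ℝ) ≤ 1 + R by linarith)
    rwa [Real.sqrt_one] at h
  have hMpos : 0 < M := lt_of_lt_of_le one_pos hM1
  have hMVB : ∀ Z : Matrix (Fin n) (Fin p) ℝ, ‖Zᵀ * Z - 1‖ ≤ R → MVB M Z := by
    intro Z hZ
    rw [hMeq]
    exact mvb_of_constraint Z hZ
  -- facts about N
  have hgc : Continuous g := g_continuous f g hf hg
  have hbddN : BddAbove ((fun Z => ‖g Z‖) ''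
      {Z : Matrix (Fin n) (Fin p) ℝ | ‖Zᵀ * Z - 1‖ ≤ R}) :=
    ((isCompact_C R).image hgc.norm).bddAbove
  have hNub : ∀ Z : Matrix (Fin n) (Fin p) ℝ, ‖Zᵀ * Z - 1‖ ≤ R → ‖g Z‖ ≤ N :=
    fun Z hZ => hN ▸ le_csSup hbddN ⟨Z, hZ, rfl⟩
  have hN0 : 0 ≤ N := le_trans (norm_nonneg (g X0)) (hNub X0 hX0C)
  -- facts about β
  have hβ4 : 4 * M * N / σ ^ 2 < β :=
    lt_of_le_of_lt (le_max_of_le_right (le_max_right _ _)) hβ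
  have hσ2 : 0 < σ ^ 2 := pow_pos hσ0 2
  have hβσ : 4 * M * N < β * σ ^ 2 := by
    rw [div_lt_iff₀ hσ2] at hβ4
    linarith
  have hMN0 : 0 ≤ M * N := mul_nonneg hMpos.le hN0
  have hβpos : 0 < β := arith_beta_pos hσ0 hMN0 hβσ
  -- facts about NL
  have hNL0 : 0 ≤ NL := by
    rw [hNL]
    have h1 : 0 ≤ (1 + M ^ 2) * N := mul_nonneg (by positivity) hN0
    have h2 : 0 ≤ β * R * M := mul_nonneg (mul_nonneg hβpos.le hRpos.le) hMpos.le
    linarith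
  have hNLpos : 0 < NL := by
    rcases eq_or_lt_of_le hNL0 with h | h
    · exfalso
      have h2 := hc2.2
      rw [← h] at h2
      norm_num at h2
      linarith [hc2.1]
    · exact h
  have hNLβRM : β * R * M ≤ NL := by
    rw [hNL]
    have h1 : 0 ≤ (1 + M ^ 2) * N := mul_nonneg (by positivity) hN0
    linarith
  -- facts about c₂ and η
  have hc2pos : 0 < c₂ := hc2.1
  have hc2NL : c₂ * (2 * NL ^ 2) ≤ R ^ 2 * (β * σ ^ 2 - 4 * M * N) :=
    (le_div_iff₀ (mul_pos two_pos (pow_pos hNLpos 2))).mp hc2.2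
  have hηc : ∀ k, R + 2 * M ^ 2 ≤ η k * c₂ := by
    intro k
    have h1 : (R + 2 * M ^ 2) / c₂ ≤ ηlo := by
      rw [hηlo]
      exact le_max_of_le_right (le_max_right _ _)
    have h2 : (R + 2 * M ^ 2) / c₂ ≤ η k := le_trans h1 (hη k).1
    calc R + 2 * M ^ 2 = (R + 2 * M ^ 2) / c₂ * c₂ := by field_simp
      _ ≤ η k * c₂ := mul_le_mul_of_nonneg_right h2 hc2pos.le
  have hη2β : ∀ k, 2 * β ≤ η k := fun k =>
    arith_eta2β hRpos hσ0 hσ1 hM1 hMN0 hβpos hNLβRM hc2pos hc2NL (hηc k)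
  have hηpos : ∀ k, 0 < η k := fun k => lt_of_lt_of_le (by linarith) (hη2β k)
  have hηD : ∀ k, NL ^ 2 ≤ 2 * R * (β * (1 - R) - M * N) * η k := fun k =>
    arith_etaD hRpos hR1 hσ0 hσ1 hM1 hMN0 hβpos hβσ hRle hc2pos hc2NL (hηc k)
  -- the induction: constraint violation stays bounded by R
  have hnorm : ∀ k, ‖(X k)ᵀ * X k - 1‖ ≤ R := by
    intro k
    induction k with
    | zero => rw [hX0]; exact hX0C
    | succ k ih =>
      set Z : Matrix (Fin n) (Fin p) ℝ := X k with hZdef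
      set t : ℝ := 1 / η k with htdef
      have ht0 : 0 < t := by rw [htdef]; exact div_pos one_pos (hηpos k)
      have ht2β : 2 * t * β ≤ 1 := by
        rw [htdef, show (2:ℝ) * (1 / η k) * β = (2 * β) / η k by ring,
          div_le_one (hηpos k)]
        exact hη2β k
      have htNL : t * NL ^ 2 ≤ 2 * R * (β * (1 - R) - M * N) := by
        rw [htdef, div_mul_eq_mul_div, div_le_iff₀ (hηpos k)]
        calc 1 * NL ^ 2 = NL ^ 2 := one_mul _
          _ ≤ 2 * R * (β * (1 - R) - M * N) * η k := hηD k
      have hrw : X (k + 1) = Z - t • (g Z - Z * ((1/2 : ℝ) • ((g Z)ᵀ * Z + Zᵀ * g Z)) +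
          β • (Z * (Zᵀ * Z - 1))) := by
        rw [hrec k, hgL]
      have hid := step_identity (a := n) (b := p) Z (g Z) t β
      rw [← hrw] at hid
      -- abbreviations
      set S : Matrix (Fin p) (Fin p) ℝ := Zᵀ * Z - 1 with hSdef
      set Λ : Matrix (Fin p) (Fin p) ℝ := (1/2 : ℝ) • ((g Z)ᵀ * Z + Zᵀ * g Z) with hΛdef
      set G : Matrix (Fin n) (Fin p) ℝ := g Z - Z * Λ + β • (Z * S) with hGdef
      -- norm bounds
      have hSR : ‖S‖ ≤ R := ih
      have hS0 : 0 ≤ ‖S‖ := norm_nonneg _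
      have hZM : MVB M Z := hMVB Z ih
      have hZMT : MVB M Zᵀ := mvb_transpose hMpos.le hZM
      have hgN : ‖g Z‖ ≤ N := hNub Z ih
      have hΛMN : ‖Λ‖ ≤ M * N := by
        have h1 : ‖(g Z)ᵀ * Z‖ = ‖Zᵀ * g Z‖ := by
          rw [← Matrix.frobenius_norm_transpose ((g Z)ᵀ * Z), Matrix.transpose_mul,
            Matrix.transpose_transpose]
        have h2 : ‖Zᵀ * g Z‖ ≤ M * ‖g Z‖ := mvb_mul_left hMpos.le hZMT (g Z)
        have h3 : ‖Λ‖ ≤ (1/2 : ℝ) * (‖(g Z)ᵀ * Z‖ + ‖Zᵀ * g Z‖) := by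
          rw [hΛdef, norm_smul]
          simp only [Real.norm_eq_abs]
          rw [abs_of_nonneg (by norm_num : (0:ℝ) ≤ 1/2)]
          exact mul_le_mul_of_nonneg_left (norm_add_le _ _) (by norm_num)
        rw [h1] at h3
        calc ‖Λ‖ ≤ (1/2 : ℝ) * (‖Zᵀ * g Z‖ + ‖Zᵀ * g Z‖) := h3
          _ = ‖Zᵀ * g Z‖ := by ring
          _ ≤ M * ‖g Z‖ := h2
          _ ≤ M * N := mul_le_mul_of_nonneg_left hgN hMpos.le
      have hGNL : ‖G‖ ≤ NL := by
        have h1 : ‖Z * Λ‖ ≤ M * ‖Λ‖ := mvb_mul_left hMpos.le hZM Λ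
        have h2 : ‖Z * S‖ ≤ M * ‖S‖ := mvb_mul_left hMpos.le hZM S
        have h3 : ‖G‖ ≤ ‖g Z‖ + ‖Z * Λ‖ + β * ‖Z * S‖ := by
          rw [hGdef]
          calc ‖g Z - Z * Λ + β • (Z * S)‖ ≤ ‖g Z - Z * Λ‖ + ‖β • (Z * S)‖ := norm_add_le _ _
            _ ≤ ‖g Z‖ + ‖Z * Λ‖ + ‖β • (Z * S)‖ := by linarith [norm_sub_le (g Z) (Z * Λ)]
            _ = ‖g Z‖ + ‖Z * Λ‖ + β * ‖Z * S‖ := by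
                rw [norm_smul, Real.norm_eq_abs, abs_of_nonneg hβpos.le]
        rw [hNL]
        have h4 : ‖Z * Λ‖ ≤ M * (M * N) :=
          le_trans h1 (mul_le_mul_of_nonneg_left hΛMN hMpos.le)
        have h5 : β * ‖Z * S‖ ≤ β * (M * R) := by
          have := le_trans h2 (mul_le_mul_of_nonneg_left hSR hMpos.le)
          exact mul_le_mul_of_nonneg_left this hβpos.le
        linarith
      -- assemble the bound on the new constraint violation
      have hcoef : 0 ≤ 1 - 2 * t * β := by linarith
      have hnorm1 : ‖(X (k+1))ᵀ * X (k+1) - 1‖ ≤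
          (1 - 2*t*β) * ‖S‖ + (2*t*β) * (‖S‖ * ‖S‖) + t * (‖S‖ * ‖Λ‖ + ‖Λ‖ * ‖S‖) +
            (t*t) * (‖G‖ * ‖G‖) := by
        rw [hid]
        have n1 : ‖(1 - 2*t*β) • S‖ = (1 - 2*t*β) * ‖S‖ := by
          rw [norm_smul, Real.norm_eq_abs, abs_of_nonneg hcoef]
        have n2 : ‖(-(2*t*β)) • (S * S)‖ ≤ (2*t*β) * (‖S‖ * ‖S‖) := by
          rw [norm_smul, Real.norm_eq_abs, abs_neg, abs_of_nonneg (by positivity)]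
          exact mul_le_mul_of_nonneg_left (Matrix.frobenius_norm_mul S S) (by positivity)
        have n3 : ‖t • (S * Λ + Λ * S)‖ ≤ t * (‖S‖ * ‖Λ‖ + ‖Λ‖ * ‖S‖) := by
          rw [norm_smul, Real.norm_eq_abs, abs_of_nonneg ht0.le]
          refine mul_le_mul_of_nonneg_left ?_ ht0.le
          calc ‖S * Λ + Λ * S‖ ≤ ‖S * Λ‖ + ‖Λ * S‖ := norm_add_le _ _
            _ ≤ ‖S‖ * ‖Λ‖ + ‖Λ‖ * ‖S‖ :=
                add_le_add (Matrix.frobenius_norm_mul S Λ) (Matrix.frobenius_norm_mul Λ S)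
        have n4 : ‖(t*t) • (Gᵀ * G)‖ ≤ (t*t) * (‖G‖ * ‖G‖) := by
          rw [norm_smul, Real.norm_eq_abs, abs_of_nonneg (by positivity)]
          refine mul_le_mul_of_nonneg_left ?_ (by positivity)
          calc ‖Gᵀ * G‖ ≤ ‖Gᵀ‖ * ‖G‖ := Matrix.frobenius_norm_mul Gᵀ G
            _ = ‖G‖ * ‖G‖ := by rw [Matrix.frobenius_norm_transpose]
        have t1 := norm_add_le ((1 - 2*t*β) • S + (-(2*t*β)) • (S * S) + t • (S * Λ + Λ * S))
          ((t*t) • (Gᵀ * G))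
        have t2 := norm_add_le ((1 - 2*t*β) • S + (-(2*t*β)) • (S * S)) (t • (S * Λ + Λ * S))
        have t3 := norm_add_le ((1 - 2*t*β) • S) ((-(2*t*β)) • (S * S))
        rw [n1] at t3
        linarith
      -- final scalar estimate
      have hΛ0 : 0 ≤ ‖Λ‖ := norm_nonneg _
      have hG0 : 0 ≤ ‖G‖ := norm_nonneg _
      have key : (1 - 2*t*β) * ‖S‖ + (2*t*β) * (‖S‖ * ‖S‖) + t * (‖S‖ * ‖Λ‖ + ‖Λ‖ * ‖S‖) +
          (t*t) * (‖G‖ * ‖G‖) ≤ R :=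
        arith_key hRpos hR1 hMN0 hβpos hNL0 ht0 ht2β htNL hSR hS0 hΛMN hΛ0 hGNL hG0
      exact le_trans hnorm1 key
  -- conclude
  intro k
  refine ⟨?_, hnorm k⟩
  have hb := hnorm k
  refine le_sigmaMin hp hσ0.le fun w => ?_
  have hlow := mvb_lower (X k) hb w
  have hsum : 0 ≤ ∑ j, (w j) ^ 2 :=
    Finset.sum_nonneg fun j _ => sq_nonneg (w j)
  have hfac : 0 ≤ (1 - R - σ ^ 2) * ∑ j, (w j) ^ 2 :=
    mul_nonneg (by linarith) hsum
  linarith [hlow, hfac]
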